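/- (Lemma 2.2, interior part.) Let Π ∈ M_n(ℂ) be a Hermitian unitary matrix (Π* = Π and Π² = 1). Let f : 𝕋 → M_n(ℂ) satisfy Π f(z) Π = −f(z) for every z ∈ 𝕋, and let (f₋, f₊) be a right canonical factorization datum for f. Then Π · (f₋(z̄) f₊(z)) · Π = −f₋(z̄) f₊(z) for every z in the closed unit disk 𝔻̄; that is, the interior extension f^e of f anticommutes with Π at every point of 𝔻̄. -/

import Mathlib

open Complex Matrix

/-- The closed unit disk in `ℂ`. -/
def closedDisk : Set ℂ := {z : ℂ | ‖z‖ ≤ 1}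

/-- The open unit disk in `ℂ`. -/
def openDisk : Set ℂ := {z : ℂ | ‖z‖ < 1}

/-- A right canonical factorization datum for `f : 𝕋 → Mₙ(ℂ)`: a pair `(fm, fp)` of maps on the
closed unit disk, continuous there, holomorphic on the open disk, taking invertible values, with
`f z = fm z̄ * fp z` on the unit circle. -/
structure RightCanonicalFactorizationDatum (n : ℕ)
    (f fm fp : ℂ → Matrix (Fin n) (Fin n) ℂ) : Prop where
  cont_m : ContinuousOn fm closedDisk
  cont_p : ContinuousOn fp closedDisk
  hol_m : ∀ i j, DifferentiableOn ℂ (fun z => fm z i j) openDisk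
  hol_p : ∀ i j, DifferentiableOn ℂ (fun z => fp z i j) openDisk
  unit_m : ∀ z ∈ closedDisk, IsUnit (fm z)
  unit_p : ∀ z ∈ closedDisk, IsUnit (fp z)
  factor : ∀ z : ℂ, ‖z‖ = 1 → f z = fm (starRingEnd ℂ z) * fp z


lemma openDisk_eq : openDisk = Metric.ball (0:ℂ) 1 := by
  ext z; simp [openDisk, Metric.mem_ball, dist_zero_right]

lemma closedDisk_eq : closedDisk = Metric.closedBall (0:ℂ) 1 := by
  ext z; simp [closedDisk, Metric.mem_closedBall, dist_zero_right]

lemma isOpen_openDisk : IsOpen openDisk := by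
  rw [openDisk_eq]; exact Metric.isOpen_ball

lemma closure_openDisk : closure openDisk = closedDisk := by
  rw [openDisk_eq, closedDisk_eq, closure_ball (0:ℂ) one_ne_zero]

lemma frontier_openDisk : frontier openDisk = {z : ℂ | ‖z‖ = 1} := by
  rw [openDisk_eq, frontier_ball (0:ℂ) one_ne_zero]
  ext z; simp [Metric.mem_sphere, dist_zero_right]

lemma openDisk_subset : openDisk ⊆ closedDisk := by
  intro z hz
  simp only [openDisk, Set.mem_setOf_eq] at hz
  simp only [closedDisk, Set.mem_setOf_eq]
  exact le_of_lt hz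

lemma one_mem_closedDisk : (1:ℂ) ∈ closedDisk := by simp [closedDisk]

/-- Maximum principle step: real part vanishing on the boundary circle propagates inside. -/
lemma re_eq_zero_of_boundary (h : ℂ → ℂ)
    (hd : DifferentiableOn ℂ h openDisk) (hc : ContinuousOn h closedDisk)
    (hb : ∀ z : ℂ, ‖z‖ = 1 → (h z).re = 0) :
    ∀ z ∈ closedDisk, (h z).re = 0 := by
  have hcl : ContinuousOn h (closure openDisk) := by rwa [closure_openDisk]
  have hbdd : Bornology.IsBounded openDisk := by
    rw [openDisk_eq]; exact Metric.isBounded_ball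
  intro z hz
  have hzc : z ∈ closure openDisk := by rwa [closure_openDisk]
  have H1 : ‖Complex.exp (h z)‖ ≤ 1 := by
    refine Complex.norm_le_of_forall_mem_frontier_norm_le hbdd
      ⟨Complex.differentiable_exp.comp_differentiableOn hd,
       Complex.continuous_exp.comp_continuousOn hcl⟩ ?_ hzc
    intro w hw
    rw [frontier_openDisk] at hw
    simp [Complex.norm_exp, hb w hw]
  have H2 : ‖Complex.exp (-(h z))‖ ≤ 1 := by
    refine Complex.norm_le_of_forall_mem_frontier_norm_le hbdd
      ⟨Complex.differentiable_exp.comp_differentiableOn hd.neg,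
       Complex.continuous_exp.comp_continuousOn hcl.neg⟩ ?_ hzc
    intro w hw
    rw [frontier_openDisk] at hw
    simp [Complex.norm_exp, hb w hw]
  rw [Complex.norm_exp, Real.exp_le_one_iff] at H1 H2
  simp only [Complex.neg_re, neg_nonpos] at H2
  linarith

/-- A holomorphic function on the disk, continuous up to the boundary, with real values
is constant. -/
lemma eq_const_of_im_eq_zero (h : ℂ → ℂ)
    (hd : DifferentiableOn ℂ h openDisk) (hc : ContinuousOn h closedDisk)
    (him : ∀ z ∈ closedDisk, (h z).im = 0) :
    ∀ z ∈ closedDisk, h z = h 1 := by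
  have han : AnalyticOnNhd ℂ h openDisk := hd.analyticOnNhd isOpen_openDisk
  have hpre : IsPreconnected openDisk := by
    rw [openDisk_eq]; exact (convex_ball (0:ℂ) 1).isPreconnected
  rcases han.is_constant_or_isOpen hpre with ⟨w, hw⟩ | hopen
  · have heq : Set.EqOn h (Function.const ℂ w) openDisk := fun x hx => hw x hx
    have heq' : Set.EqOn h (Function.const ℂ w) (closure openDisk) := by
      refine heq.of_subset_closure ?_ continuousOn_const subset_closure Set.Subset.rfl
      rwa [closure_openDisk]
    rw [closure_openDisk] at heq'
    intro z hz
    rw [heq' hz, heq' one_mem_closedDisk]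
    rfl
  · exfalso
    have h0 : (0:ℂ) ∈ openDisk := by simp [openDisk]
    have hIm : IsOpen (h '' openDisk) := hopen openDisk Set.Subset.rfl isOpen_openDisk
    rcases Metric.isOpen_iff.mp hIm (h 0) ⟨0, h0, rfl⟩ with ⟨ε, hε, hball⟩
    have hmem : h 0 + (ε/2 : ℝ) * Complex.I ∈ Metric.ball (h 0) ε := by
      have : dist (h 0 + (ε/2 : ℝ) * Complex.I) (h 0) = ε/2 := by
        rw [dist_eq_norm, add_sub_cancel_left, norm_mul, Complex.norm_I, mul_one,
          Complex.norm_real, Real.norm_eq_abs, abs_of_pos (by linarith)]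
      rw [Metric.mem_ball, this]; linarith
    rcases hball hmem with ⟨y, hymem, hyeq⟩
    have h1 : (h y).im = 0 := him y (openDisk_subset hymem)
    have h2 : (h 0).im = 0 := him 0 (openDisk_subset h0)
    rw [hyeq] at h1
    simp only [Complex.add_im, Complex.mul_im, Complex.ofReal_re, Complex.I_im,
      Complex.ofReal_im, Complex.I_re, mul_one, mul_zero, add_zero, zero_mul] at h1
    rw [h2] at h1
    linarith

/-- `z ↦ conj (g (conj z))` is holomorphic when `g` is. -/
lemma differentiableOn_conj_conj {g : ℂ → ℂ} (hg : DifferentiableOn ℂ g openDisk) :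
    DifferentiableOn ℂ (fun z => (starRingEnd ℂ) (g ((starRingEnd ℂ) z))) openDisk := by
  intro z hz
  have hz' : (starRingEnd ℂ) z ∈ openDisk := by
    simpa [openDisk] using hz
  have hga : DifferentiableAt ℂ g ((starRingEnd ℂ) z) :=
    (hg _ hz').differentiableAt (isOpen_openDisk.mem_nhds hz')
  set d := deriv g ((starRingEnd ℂ) z) with hd
  have hder : HasDerivAt g d ((starRingEnd ℂ) z) := hga.hasDerivAt
  have key : HasDerivAt (fun z => (starRingEnd ℂ) (g ((starRingEnd ℂ) z)))
      ((starRingEnd ℂ) d) z := by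
    rw [hasDerivAt_iff_tendsto_slope] at hder ⊢
    have hconj : Filter.Tendsto (starRingEnd ℂ) (nhdsWithin z {z}ᶜ)
        (nhdsWithin ((starRingEnd ℂ) z) {(starRingEnd ℂ) z}ᶜ) := by
      apply tendsto_nhdsWithin_of_tendsto_nhds_of_eventually_within
      · exact (Complex.continuous_conj.tendsto z).mono_left nhdsWithin_le_nhds
      · filter_upwards [self_mem_nhdsWithin] with x hx
        simp only [Set.mem_compl_iff, Set.mem_singleton_iff] at hx ⊢
        intro hcontra
        exact hx (by simpa using congrArg (starRingEnd ℂ) hcontra)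
    have hcomp : Filter.Tendsto
        (fun x => (starRingEnd ℂ) (slope g ((starRingEnd ℂ) z) ((starRingEnd ℂ) x)))
        (nhdsWithin z {z}ᶜ) (nhds ((starRingEnd ℂ) d)) :=
      (Complex.continuous_conj.tendsto d).comp (hder.comp hconj)
    refine hcomp.congr (fun x => ?_)
    simp only [slope_def_field, Function.comp, map_div₀, map_sub, Complex.conj_conj]
  exact key.differentiableAt.differentiableWithinAt

/-- Joint differentiability/continuity on the disks. -/
def Good (g : ℂ → ℂ) : Prop :=
  DifferentiableOn ℂ g openDisk ∧ ContinuousOn g closedDisk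

lemma Good.const (c : ℂ) : Good fun _ => c := ⟨differentiableOn_const c, continuousOn_const⟩

lemma Good.mul {a b : ℂ → ℂ} (ha : Good a) (hb : Good b) : Good fun z => a z * b z :=
  ⟨ha.1.mul hb.1, ha.2.mul hb.2⟩

lemma Good.neg {a : ℂ → ℂ} (ha : Good a) : Good fun z => -(a z) := ⟨ha.1.neg, ha.2.neg⟩

lemma Good.sum {ι : Type*} (u : Finset ι) (f : ι → ℂ → ℂ) (hf : ∀ i ∈ u, Good (f i)) :
    Good fun z => ∑ i ∈ u, f i z :=
  ⟨DifferentiableOn.fun_sum fun i hi => (hf i hi).1,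
   continuousOn_finset_sum u fun i hi => (hf i hi).2⟩

lemma Good.prod {ι : Type*} (u : Finset ι) (f : ι → ℂ → ℂ) (hf : ∀ i ∈ u, Good (f i)) :
    Good fun z => ∏ i ∈ u, f i z :=
  ⟨DifferentiableOn.fun_finset_prod fun i hi => (hf i hi).1,
   continuousOn_finset_prod u fun i hi => (hf i hi).2⟩

lemma Good.inv {a : ℂ → ℂ} (ha : Good a) (hne : ∀ z ∈ closedDisk, a z ≠ 0) :
    Good fun z => (a z)⁻¹ :=
  ⟨ha.1.inv fun z hz => hne z (openDisk_subset hz), ha.2.inv₀ hne⟩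

section MatrixGood

variable {n : ℕ}

lemma goodDet {A : ℂ → Matrix (Fin n) (Fin n) ℂ}
    (hA : ∀ i j, Good fun z => A z i j) : Good fun z => (A z).det := by
  simp only [Matrix.det_apply']
  exact Good.sum _ _ fun σ _ =>
    (Good.const _).mul (Good.prod _ _ fun i _ => hA (σ i) i)

lemma goodMulEnt {A B : ℂ → Matrix (Fin n) (Fin n) ℂ}
    (hA : ∀ i j, Good fun z => A z i j) (hB : ∀ i j, Good fun z => B z i j) :
    ∀ i j, Good fun z => (A z * B z) i j := by
  intro i j
  simp only [Matrix.mul_apply]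
  exact Good.sum _ _ fun k _ => (hA i k).mul (hB k j)

lemma goodInvEnt {A : ℂ → Matrix (Fin n) (Fin n) ℂ}
    (hA : ∀ i j, Good fun z => A z i j) (hU : ∀ z ∈ closedDisk, IsUnit (A z)) :
    ∀ i j, Good fun z => (A z)⁻¹ i j := by
  intro i j
  have hdet : Good fun z => (A z).det := goodDet hA
  have hne : ∀ z ∈ closedDisk, (A z).det ≠ 0 := fun z hz =>
    ((Matrix.isUnit_iff_isUnit_det _).mp (hU z hz)).ne_zero
  have hadj : Good fun z => (A z).adjugate i j := by
    simp only [Matrix.adjugate_apply]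
    apply goodDet
    intro a b
    simp only [Matrix.updateRow_apply]
    by_cases hab : a = j
    · simp only [hab, if_true]; exact Good.const _
    · simp only [hab, if_false]; exact hA a b
  have hrw : ∀ z, (A z)⁻¹ i j = ((A z).det)⁻¹ * (A z).adjugate i j := by
    intro z
    rw [Matrix.inv_def, Ring.inverse_eq_inv, Matrix.smul_apply, smul_eq_mul]
  simp only [hrw]
  exact (hdet.inv hne).mul hadj

end MatrixGood

/-- Key scalar lemma: if two Good functions have conjugate boundary values,
both are constant. -/
lemma boundary_conj_const (v w : ℂ → ℂ) (hv : Good v) (hw : Good w)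
    (hb : ∀ z : ℂ, ‖z‖ = 1 → v z = (starRingEnd ℂ) (w z)) :
    (∀ z ∈ closedDisk, v z = v 1) ∧ (∀ z ∈ closedDisk, w z = w 1) := by
  have him : ∀ z ∈ closedDisk, (v z + w z).im = 0 := by
    intro z hz
    have h' := re_eq_zero_of_boundary (fun z => Complex.I * (v z + w z))
      ((differentiableOn_const _).mul (hv.1.add hw.1))
      (continuousOn_const.mul (hv.2.add hw.2))
      (fun x hx1 => by
        beta_reduce
        rw [hb x hx1]
        simp [Complex.mul_re]) z hz
    simp only [Complex.mul_re, Complex.I_re, Complex.I_im, zero_mul, one_mul,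
      zero_sub, neg_eq_zero] at h'
    simpa using h'
  have hre : ∀ z ∈ closedDisk, (v z - w z).re = 0 := by
    intro z hz
    exact re_eq_zero_of_boundary (fun z => v z - w z) (hv.1.sub hw.1) (hv.2.sub hw.2)
      (fun x hx1 => by beta_reduce; rw [hb x hx1]; simp) z hz
  have c1 : ∀ z ∈ closedDisk, v z + w z = v 1 + w 1 :=
    eq_const_of_im_eq_zero _ (hv.1.add hw.1) (hv.2.add hw.2) him
  have c2 : ∀ z ∈ closedDisk, v z - w z = v 1 - w 1 := by
    have := eq_const_of_im_eq_zero (fun z => Complex.I * (v z - w z))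
      ((differentiableOn_const _).mul (hv.1.sub hw.1))
      (continuousOn_const.mul (hv.2.sub hw.2))
      (fun x hx => by
        have h' := hre x hx
        simp only [Complex.sub_re] at h'
        simp [Complex.mul_im]
        linarith)
    intro z hz
    have h := this z hz
    exact mul_left_cancel₀ Complex.I_ne_zero h
  constructor
  · intro z hz
    linear_combination (c1 z hz + c2 z hz) / 2
  · intro z hz
    linear_combination (c1 z hz - c2 z hz) / 2

/-- If two entrywise-Good matrix families satisfy `G (conj z) = H z` on the circle,
then both are constant on the closed disk. -/
lemma matrix_boundary_const {n : ℕ} (G H : ℂ → Matrix (Fin n) (Fin n) ℂ)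
    (hG : ∀ i j, Good fun z => G z i j) (hH : ∀ i j, Good fun z => H z i j)
    (hbdry : ∀ z : ℂ, ‖z‖ = 1 → G ((starRingEnd ℂ) z) = H z) :
    (∀ z ∈ closedDisk, G z = G 1) ∧ (∀ z ∈ closedDisk, H z = H 1) := by
  have mapsTo : ∀ z ∈ closedDisk, (starRingEnd ℂ) z ∈ closedDisk := by
    intro z hz; simpa [closedDisk] using hz
  have main : ∀ i j, (∀ z ∈ closedDisk, H z i j = H 1 i j) ∧
      (∀ z ∈ closedDisk, G z i j = G 1 i j) := by
    intro i j
    have hwG : Good fun z => (starRingEnd ℂ) (G ((starRingEnd ℂ) z) i j) := by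
      constructor
      · exact differentiableOn_conj_conj (hG i j).1
      · exact Complex.continuous_conj.comp_continuousOn
          (((hG i j).2.comp Complex.continuous_conj.continuousOn) mapsTo)
    have hb : ∀ z : ℂ, ‖z‖ = 1 → H z i j
        = (starRingEnd ℂ) ((starRingEnd ℂ) (G ((starRingEnd ℂ) z) i j)) := by
      intro z hz1
      rw [Complex.conj_conj, ← hbdry z hz1]
    obtain ⟨hv1, hw1⟩ := boundary_conj_const _ _ (hH i j) hwG hb
    refine ⟨hv1, ?_⟩
    intro z hz
    have h := hw1 ((starRingEnd ℂ) z) (mapsTo z hz)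
    simp only [Complex.conj_conj, _root_.map_one] at h
    exact (starRingEnd ℂ).injective h
  exact ⟨fun z hz => Matrix.ext fun i j => (main i j).2 z hz,
         fun z hz => Matrix.ext fun i j => (main i j).1 z hz⟩

/-- If the symbol `f` anticommutes with a Hermitian unitary `P` on the unit circle, then its
interior extension `f^e(z) = f₋(z̄) f₊(z)` anticommutes with `P` on the whole closed unit disk. -/
theorem interior_extension_anticommutes_with_chiral_symmetry
    {n : ℕ} (hn : 1 ≤ n) (P : Matrix (Fin n) (Fin n) ℂ)
    (hP : P.IsHermitian) (hP2 : P * P = 1)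
    (f fm fp : ℂ → Matrix (Fin n) (Fin n) ℂ)
    (hchiral : ∀ z : ℂ, ‖z‖ = 1 → P * f z * P = -(f z))
    (hf : RightCanonicalFactorizationDatum n f fm fp) :
    ∀ z ∈ closedDisk,
      P * (fm (starRingEnd ℂ z) * fp z) * P = -(fm (starRingEnd ℂ z) * fp z) := by
  classical
  -- entrywise goodness of the factors
  have entry_cont : ∀ (g : ℂ → Matrix (Fin n) (Fin n) ℂ), ContinuousOn g closedDisk →
      ∀ i j, ContinuousOn (fun z => g z i j) closedDisk := by
    intro g hg i j
    have h : Continuous fun M : Matrix (Fin n) (Fin n) ℂ => M i j :=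
      (continuous_apply j).comp (continuous_apply i)
    exact h.comp_continuousOn hg
  have hfmG : ∀ i j, Good fun z => fm z i j :=
    fun i j => ⟨hf.hol_m i j, entry_cont fm hf.cont_m i j⟩
  have hfpG : ∀ i j, Good fun z => fp z i j :=
    fun i j => ⟨hf.hol_p i j, entry_cont fp hf.cont_p i j⟩
  have hPG : ∀ (Q : Matrix (Fin n) (Fin n) ℂ) i j, Good fun _ : ℂ => Q i j :=
    fun Q i j => Good.const _
  -- membership facts
  have mapsTo : ∀ z ∈ closedDisk, (starRingEnd ℂ) z ∈ closedDisk := by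
    intro z hz; simpa [closedDisk] using hz
  have circ_mem : ∀ z : ℂ, ‖z‖ = 1 → z ∈ closedDisk := by
    intro z hz
    simp only [closedDisk, Set.mem_setOf_eq, hz]
    exact le_refl 1
  -- cancellation helpers
  have cancelP : ∀ X : Matrix (Fin n) (Fin n) ℂ, P * (P * X) = X := fun X => by
    rw [← Matrix.mul_assoc, hP2, Matrix.one_mul]
  have cancelL : ∀ (A : Matrix (Fin n) (Fin n) ℂ), IsUnit A →
      ∀ X, A⁻¹ * (A * X) = X := fun A hA X => by
    rw [← Matrix.mul_assoc, Matrix.nonsing_inv_mul A ((Matrix.isUnit_iff_isUnit_det A).mp hA),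
      Matrix.one_mul]
  have cancelR : ∀ (A : Matrix (Fin n) (Fin n) ℂ), IsUnit A →
      ∀ X, A * (A⁻¹ * X) = X := fun A hA X => by
    rw [← Matrix.mul_assoc, Matrix.mul_nonsing_inv A ((Matrix.isUnit_iff_isUnit_det A).mp hA),
      Matrix.one_mul]
  -- the two auxiliary families
  set G : ℂ → Matrix (Fin n) (Fin n) ℂ := fun z => (fm z)⁻¹ * (P * (fm z * P)) with hGdef
  set H : ℂ → Matrix (Fin n) (Fin n) ℂ := fun z => -(fp z * (P * ((fp z)⁻¹ * P))) with hHdef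
  have hGent : ∀ i j, Good fun z => G z i j := by
    intro i j
    simp only [hGdef]
    exact goodMulEnt (goodInvEnt hfmG hf.unit_m)
      (goodMulEnt (hPG P) (goodMulEnt hfmG (hPG P))) i j
  have hHent : ∀ i j, Good fun z => H z i j := by
    intro i j
    simp only [hHdef, Matrix.neg_apply]
    exact (goodMulEnt hfpG
      (goodMulEnt (hPG P) (goodMulEnt (goodInvEnt hfpG hf.unit_p) (hPG P))) i j).neg
  -- boundary identity G (conj z) = H z
  have hbdry : ∀ z : ℂ, ‖z‖ = 1 → G ((starRingEnd ℂ) z) = H z := by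
    intro z hz1
    have hzc : z ∈ closedDisk := circ_mem z hz1
    have hwc : (starRingEnd ℂ) z ∈ closedDisk := mapsTo z hzc
    have hM : IsUnit (fm ((starRingEnd ℂ) z)) := hf.unit_m _ hwc
    have hQ : IsUnit (fp z) := hf.unit_p _ hzc
    have hPf : P * (fm ((starRingEnd ℂ) z) * fp z) * P = -(fm ((starRingEnd ℂ) z) * fp z) := by
      rw [← hf.factor z hz1]; exact hchiral z hz1
    have h1 := congrArg
      (fun X => (fm ((starRingEnd ℂ) z))⁻¹ * X * (P * ((fp z)⁻¹ * P))) hPf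
    simp only [Matrix.mul_assoc, Matrix.mul_neg, Matrix.neg_mul, cancelP,
      cancelL _ hM, cancelR _ hQ] at h1
    simp only [hGdef, hHdef, Matrix.mul_assoc]
    exact h1
  -- constancy
  obtain ⟨hGconst, hHconst⟩ := matrix_boundary_const G H hGent hHent hbdry
  have hGH1 : G 1 = H 1 := by
    have := hbdry 1 (by simp)
    simpa using this
  -- final algebra
  intro z hz
  have hwc : (starRingEnd ℂ) z ∈ closedDisk := mapsTo z hz
  have hM : IsUnit (fm ((starRingEnd ℂ) z)) := hf.unit_m _ hwc
  have hQ : IsUnit (fp z) := hf.unit_p _ hz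
  set M := fm ((starRingEnd ℂ) z) with hMdef
  set Q := fp z with hQdef
  set C := G 1 with hCdef
  have hGw : M⁻¹ * (P * (M * P)) = C := hGconst _ hwc
  have hHz : -(Q * (P * (Q⁻¹ * P))) = C := by
    rw [hGH1]
    exact hHconst z hz
  -- from hGw : P * M = M * (C * P)
  have h3 : P * (M * P) = M * C := by
    have := congrArg (fun X => M * X) hGw
    simpa only [cancelR _ hM] using this
  have h4 : P * M = M * (C * P) := by
    have := congrArg (fun X => X * P) h3
    simp only [Matrix.mul_assoc, hP2, Matrix.mul_one] at this
    exact this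
  -- from hHz : C * (P * (Q * P)) = -Q
  have h5 : C * (P * (Q * P)) = -Q := by
    have := congrArg (fun X => X * (P * (Q * P))) hHz
    simp only [Matrix.mul_assoc, Matrix.neg_mul, cancelP, cancelL _ hQ, hP2,
      Matrix.mul_one] at this
    exact this.symm
  calc P * (M * Q) * P = (P * M) * (Q * P) := by simp only [Matrix.mul_assoc]
    _ = (M * (C * P)) * (Q * P) := by rw [h4]
    _ = M * (C * (P * (Q * P))) := by simp only [Matrix.mul_assoc]
    _ = M * (-Q) := by rw [h5]
    _ = -(M * Q) := by rw [Matrix.mul_neg]
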